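/- Let A be a nonzero commutative radical complex Banach algebra and let A_e be its unitization with the norm ‖a + λe‖₁ = ‖a‖ + |λ|. If every extreme point of D(A_e, e) were multiplicative, then the weak*-closed convex hull of the set of extreme points of D(A_e, e) would equal the singleton {φ_∞} (where φ_∞(a + λe) = λ), which is strictly contained in D(A_e, e); hence the hypothesis contradicts the Krein–Milman theorem. -/

import Mathlib

open Unitization WithLp

/-- The element `a` of `A`, viewed as the element `a + 0·e` of the unitization
`A_e = WithLp 1 (Unitization ℂ A)` equipped with the norm `‖a + λe‖₁ = ‖a‖ + |λ|`. -/
noncomputable def inrL1 {A : Type*} [NonUnitalNormedRing A] [NormedSpace ℂ A] (a : A) :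
    WithLp 1 (Unitization ℂ A) :=
  (WithLp.equiv 1 (Unitization ℂ A)).symm (Unitization.inr a)

/-- The functional `φ∞ : a + λ·e ↦ λ` on the ℓ¹-unitization, as a continuous linear map. -/
noncomputable def phiInf (A : Type*) [NonUnitalNormedRing A] [NormedSpace ℂ A]
    [IsScalarTower ℂ A A] [SMulCommClass ℂ A A] :
    WithLp 1 (Unitization ℂ A) →L[ℂ] ℂ :=
  LinearMap.mkContinuous
    ((Unitization.fstHom ℂ A).toLinearMap ∘ₗ (WithLp.linearEquiv 1 ℂ (Unitization ℂ A)).toLinearMap)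
    1
    (fun x => by
      rw [one_mul, WithLp.unitization_norm_def]
      simpa using le_add_of_nonneg_right (norm_nonneg _))

open NormedSpace

section Aux
variable {A : Type*} [NonUnitalNormedCommRing A] [NormedSpace ℂ A]
    [IsScalarTower ℂ A A] [SMulCommClass ℂ A A] [CompleteSpace A] [Nontrivial A]

lemma norm_one_l1 : ‖(1 : WithLp 1 (Unitization ℂ A))‖ = 1 := by
  rw [WithLp.unitization_norm_def]
  simp [show ofLp (1 : WithLp 1 (Unitization ℂ A)) = 1 from rfl]

lemma decomp_l1 (x : WithLp 1 (Unitization ℂ A)) :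
    x = inrL1 ((WithLp.equiv 1 _ x).snd) + ((WithLp.equiv 1 _ x).fst : ℂ) • 1 := by
  apply (WithLp.equiv 1 (Unitization ℂ A)).injective
  simp only [inrL1, WithLp.equiv_apply, WithLp.equiv_symm_apply, WithLp.ofLp_add, WithLp.ofLp_smul, Equiv.apply_symm_apply,
    show ofLp (1 : WithLp 1 (Unitization ℂ A)) = 1 from rfl]
  ext <;> simp

lemma spectrum_inrL1 (hrad : ∀ a : A, quasispectrum ℂ a = {0}) (a : A) :
    spectrum ℂ (inrL1 a) = {0} := by
  rw [show inrL1 a = (WithLp.unitizationAlgEquiv (𝕜 := ℂ) (A := A) ℂ).symm (Unitization.inr a)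
      from rfl,
    AlgEquiv.spectrum_eq, ← Unitization.quasispectrum_eq_spectrum_inr' ℂ ℂ a, hrad]

end Aux


set_option maxHeartbeats 1000000 in
/-- Let `A` be a nonzero commutative radical complex Banach algebra and `A_e` its unitization
with the norm `‖a + λe‖₁ = ‖a‖ + |λ|`.  Regard the set `D(A_e, e)` of normalized states as a
subset of the weak-star dual of `A_e`.  If every extreme point of `D(A_e, e)` were
multiplicative, then the weak-star closed convex hull of the set of extreme points of
`D(A_e, e)` would equal the singleton `{φ∞}` (where `φ∞(a + λe) = λ`), which is strictly
contained in `D(A_e, e)`; this contradicts the Krein–Milman theorem, so the hypothesis is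
absurd. -/
theorem multiplicative_extreme_states_contradicts_kreinMilman
    {A : Type*} [NonUnitalNormedCommRing A] [NormedSpace ℂ A]
    [IsScalarTower ℂ A A] [SMulCommClass ℂ A A] [CompleteSpace A] [Nontrivial A]
    (hrad : ∀ a : A, quasispectrum ℂ a = {0})
    (h : ∀ f ∈ Set.extremePoints ℝ
        {f : WeakDual ℂ (WithLp 1 (Unitization ℂ A)) | f 1 = 1 ∧ ‖WeakDual.toStrongDual f‖ = 1},
      ∀ x y : WithLp 1 (Unitization ℂ A), f (x * y) = f x * f y) :
    (closure (convexHull ℝ (Set.extremePoints ℝ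
          {f : WeakDual ℂ (WithLp 1 (Unitization ℂ A)) |
            f 1 = 1 ∧ ‖WeakDual.toStrongDual f‖ = 1})) =
        {StrongDual.toWeakDual (phiInf A)} ∧
      {StrongDual.toWeakDual (phiInf A)} ⊂
        {f : WeakDual ℂ (WithLp 1 (Unitization ℂ A)) |
          f 1 = 1 ∧ ‖WeakDual.toStrongDual f‖ = 1}) ∧
    False := by
  set B := WithLp 1 (Unitization ℂ A) with hB
  set D : Set (WeakDual ℂ B) :=
    {f : WeakDual ℂ B | f 1 = 1 ∧ ‖WeakDual.toStrongDual f‖ = 1} with hDdef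
  haveI : LocallyConvexSpace ℝ (WeakDual ℂ B) :=
    inferInstanceAs (LocallyConvexSpace ℝ (WeakBilin (topDualPairing ℂ B)))
  -- norm lower bound for members of D
  have hlow : ∀ f : WeakDual ℂ B, f 1 = 1 → 1 ≤ ‖WeakDual.toStrongDual f‖ := by
    intro f hf1
    have := (WeakDual.toStrongDual f).le_opNorm 1
    rw [norm_one_l1, mul_one] at this
    calc (1 : ℝ) = ‖f 1‖ := by rw [hf1]; simp
    _ ≤ _ := this
  -- D is the intersection of a weak*-closed hyperplane and the closed unit ball
  have hDeq : D = {f : WeakDual ℂ B | f 1 = 1} ∩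
      (WeakDual.toStrongDual ⁻¹' Metric.closedBall 0 1) := by
    ext f
    simp only [hDdef, Set.mem_setOf_eq, Set.mem_inter_iff, Set.mem_preimage,
      Metric.mem_closedBall, dist_zero_right]
    constructor
    · rintro ⟨h1, h2⟩; exact ⟨h1, by rw [dist_zero_right (E := StrongDual ℂ B)]; exact le_of_eq h2⟩
    · rintro ⟨h1, h2⟩; exact ⟨h1, le_antisymm (by rwa [dist_zero_right (E := StrongDual ℂ B)] at h2) (hlow f h1)⟩
  have hDclosed : IsClosed D := by
    rw [hDeq]
    exact ((isClosed_singleton (x := (1 : ℂ))).preimage (WeakDual.eval_continuous (1 : B))).inter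
      (WeakDual.isClosed_closedBall 0 1)
  have hDcompact : IsCompact D := by
    refine (WeakDual.isCompact_closedBall (0 : StrongDual ℂ B) 1).of_isClosed_subset hDclosed ?_
    rw [hDeq]; exact Set.inter_subset_right
  have hDconvex : Convex ℝ D := by
    intro f hf g hg a b ha hb hab
    constructor
    · show (a • f + b • g) 1 = 1
      have : (a • f + b • g) 1 = a • f 1 + b • g 1 := rfl
      rw [this, hf.1, hg.1]
      simp [← hab]
      norm_cast
    · have h1 : (a • f + b • g) 1 = 1 := by
        have : (a • f + b • g) 1 = a • f 1 + b • g 1 := rfl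
        rw [this, hf.1, hg.1]; simp [← hab]; norm_cast
      refine le_antisymm ?_ (hlow _ h1)
      have hrfl : WeakDual.toStrongDual (a • f + b • g) =
          a • WeakDual.toStrongDual f + b • WeakDual.toStrongDual g := rfl
      rw [hrfl]
      calc ‖a • WeakDual.toStrongDual f + b • WeakDual.toStrongDual g‖
          ≤ ‖a • WeakDual.toStrongDual f‖ + ‖b • WeakDual.toStrongDual g‖ := ContinuousLinearMap.opNorm_add_le _ _
        _ ≤ a * ‖WeakDual.toStrongDual f‖ + b * ‖WeakDual.toStrongDual g‖ := by
            have key : ∀ (c : ℝ), 0 ≤ c → ∀ φ : StrongDual ℂ B, ‖c • φ‖ ≤ c * ‖φ‖ := fun c hc φ =>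
              ContinuousLinearMap.opNorm_le_bound _ (by positivity) fun x => by
                rw [ContinuousLinearMap.smul_apply, norm_smul, Real.norm_of_nonneg hc, mul_assoc]
                exact mul_le_mul_of_nonneg_left (φ.le_opNorm x) hc
            exact add_le_add (key a ha _) (key b hb _)
        _ = 1 := by rw [hf.2, hg.2, mul_one, mul_one, hab]
  -- every extreme point equals φ∞
  have hext : Set.extremePoints ℝ D ⊆ {StrongDual.toWeakDual (phiInf A)} := by
    intro f hf
    have hfD : f ∈ D := extremePoints_subset hf
    have hmul := h f hf
    let φ : B →ₐ[ℂ] ℂ :=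
      AlgHom.ofLinearMap (WeakDual.toStrongDual f).toLinearMap hfD.1 hmul
    have hker : ∀ a : A, f (inrL1 a) = 0 := by
      intro a
      have := AlgHom.apply_mem_spectrum φ (inrL1 a)
      rw [spectrum_inrL1 hrad a] at this
      exact (by simpa using this : φ (inrL1 a) = 0)
    have : f = StrongDual.toWeakDual (phiInf A) := by
      apply DFunLike.ext
      intro x
      conv_lhs => rw [decomp_l1 x]
      rw [map_add, hker, map_smul, hfD.1]
      show 0 + _ • (1:ℂ) = phiInf A x
      simp only [smul_eq_mul, mul_one, zero_add]
      rfl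
    simpa using this
  -- φ∞ itself lies in D
  have hphiD : StrongDual.toWeakDual (phiInf A) ∈ D := by
    constructor
    · show phiInf A 1 = 1
      show ((WithLp.equiv 1 (Unitization ℂ A)) 1).fst = 1
      simp [show ((WithLp.equiv 1 (Unitization ℂ A)) 1) = 1 from rfl]
    · refine le_antisymm ?_ (hlow _ ?_)
      · refine ContinuousLinearMap.opNorm_le_bound _ zero_le_one fun x => ?_
        rw [one_mul]
        show ‖((WithLp.equiv 1 (Unitization ℂ A)) x).fst‖ ≤ ‖x‖
        rw [WithLp.unitization_norm_def]
        exact le_add_of_nonneg_right (norm_nonneg _)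
      · show phiInf A 1 = 1
        show ((WithLp.equiv 1 (Unitization ℂ A)) 1).fst = 1
        simp [show ((WithLp.equiv 1 (Unitization ℂ A)) 1) = 1 from rfl]
  -- a state different from φ∞
  obtain ⟨a, ha⟩ := exists_ne (0 : A)
  obtain ⟨g, hg1, hga⟩ := exists_dual_vector ℂ a (norm_ne_zero_iff.mpr ha)
  let Flin : B →ₗ[ℂ] ℂ :=
    ((Unitization.fstHom ℂ A).toLinearMap + g.toLinearMap ∘ₗ Unitization.sndHom ℂ ℂ A) ∘ₗ
      (WithLp.linearEquiv 1 ℂ (Unitization ℂ A)).toLinearMap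
  have hFbound : ∀ x : B, ‖Flin x‖ ≤ 1 * ‖x‖ := by
    intro x
    rw [one_mul, WithLp.unitization_norm_def]
    calc ‖Flin x‖ ≤ ‖((WithLp.equiv 1 _ x) : Unitization ℂ A).fst‖ +
          ‖g ((WithLp.equiv 1 _ x) : Unitization ℂ A).snd‖ := norm_add_le _ _
      _ ≤ _ := by
          gcongr
          · exact le_rfl
          calc ‖g ((WithLp.equiv 1 _ x) : Unitization ℂ A).snd‖
              ≤ ‖g‖ * ‖((WithLp.equiv 1 _ x) : Unitization ℂ A).snd‖ := g.le_opNorm _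
            _ = _ := by rw [hg1, one_mul]; rfl
  let F : B →L[ℂ] ℂ := LinearMap.mkContinuous Flin 1 hFbound
  have hF1 : F 1 = 1 := by
    show Flin 1 = 1
    show (1 : Unitization ℂ A).fst + g (1 : Unitization ℂ A).snd = 1
    simp
  have hFD : StrongDual.toWeakDual F ∈ D := by
    refine ⟨hF1, le_antisymm (F.opNorm_le_bound zero_le_one fun x => by
      exact hFbound x) (hlow _ hF1)⟩
  have hFne : StrongDual.toWeakDual F ≠ StrongDual.toWeakDual (phiInf A) := by
    intro hFeq
    have h1 : F (inrL1 a) = phiInf A (inrL1 a) := DFunLike.congr_fun hFeq (inrL1 a)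
    have h2 : F (inrL1 a) = (‖a‖ : ℂ) := by
      show Flin (inrL1 a) = _
      show (Unitization.inr a : Unitization ℂ A).fst + g (Unitization.inr a : Unitization ℂ A).snd = _
      simp [hga]
    have h3 : phiInf A (inrL1 a) = 0 := by
      show (Unitization.inr a : Unitization ℂ A).fst = 0
      simp
    rw [h2, h3] at h1
    have hna : ‖a‖ = (0 : ℝ) := by exact_mod_cast h1
    exact ha (norm_eq_zero.mp hna)
  -- Krein–Milman
  have hKM : closure (convexHull ℝ (Set.extremePoints ℝ D)) = D :=
    closure_convexHull_extremePoints hDcompact hDconvex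
  have hsub : D ⊆ {StrongDual.toWeakDual (phiInf A)} := by
    rw [← hKM]
    refine closure_minimal (convexHull_min hext (convex_singleton _)) isClosed_singleton
  exact absurd (hsub hFD) hFne
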